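/- Let a ≥ 0, m > 0, ε > 0 and t₀ > 0 be real numbers satisfying ε/2 > 2(e^{t₀/2} − 1)a, and set ε' = ε/2 − 2(e^{t₀/2} − 1)a. For t ∈ (0, t₀) define C_{t,ε} = e^{−t/2}(m + ε) − (1 − e^{−t/2})a and D_{t,ε'} = e^{−t/2}(m + ε') + (1 − e^{−t/2})a. Then for all 0 < t < t₀, C_{t,ε}² − D_{t,ε'}² ≥ e^{−t₀} ε m > 0. -/
import Mathlib


open Real

/-- The elementary gap estimate `C_{t,ε}² - D_{t,ε'}² ≥ e^{-t₀} ε m > 0` used in the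
proof of the singularity of the score function. -/
theorem gap_estimate (a m ε t₀ : ℝ) (ha : 0 ≤ a) (hm : 0 < m) (hε : 0 < ε)
    (ht₀ : 0 < t₀) (hsmall : ε / 2 > 2 * (Real.exp (t₀ / 2) - 1) * a) :
    ∀ t : ℝ, 0 < t → t < t₀ →
      (Real.exp (-t / 2) * (m + ε) - (1 - Real.exp (-t / 2)) * a) ^ 2 -
          (Real.exp (-t / 2) * (m + (ε / 2 - 2 * (Real.exp (t₀ / 2) - 1) * a)) +
            (1 - Real.exp (-t / 2)) * a) ^ 2 ≥
        Real.exp (-t₀) * ε * m ∧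
      0 < Real.exp (-t₀) * ε * m := by
  intro t ht htt
  have hs : 0 < Real.exp (-t / 2) := Real.exp_pos _
  have hs1 : Real.exp (-t / 2) ≤ 1 := Real.exp_le_one_iff.mpr (by linarith)
  have hsq : Real.exp (-t / 2) * Real.exp (-t / 2) = Real.exp (-t) := by
    rw [← Real.exp_add]; ring_nf
  have hmono : Real.exp (-t₀) ≤ Real.exp (-t) := Real.exp_le_exp.mpr (by linarith)
  have hinv : Real.exp (-t / 2) * Real.exp (t / 2) = 1 := by
    rw [← Real.exp_add, show -t / 2 + t / 2 = (0:ℝ) from by ring, Real.exp_zero]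
  have hmono2 : Real.exp (t / 2) ≤ Real.exp (t₀ / 2) := Real.exp_le_exp.mpr (by linarith)
  have key : (1 - Real.exp (-t / 2)) * a ≤
      Real.exp (-t / 2) * ((Real.exp (t₀ / 2) - 1) * a) := by
    nlinarith [mul_le_mul_of_nonneg_left hmono2 (le_of_lt hs)]
  have hCD : (Real.exp (-t / 2) * (m + ε) - (1 - Real.exp (-t / 2)) * a) -
      (Real.exp (-t / 2) * (m + (ε / 2 - 2 * (Real.exp (t₀ / 2) - 1) * a)) +
        (1 - Real.exp (-t / 2)) * a) ≥ Real.exp (-t / 2) * (ε / 2) := by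
    nlinarith
  have hε' : 0 < ε / 2 - 2 * (Real.exp (t₀ / 2) - 1) * a := by linarith
  have hsum : (Real.exp (-t / 2) * (m + ε) - (1 - Real.exp (-t / 2)) * a) +
      (Real.exp (-t / 2) * (m + (ε / 2 - 2 * (Real.exp (t₀ / 2) - 1) * a)) +
        (1 - Real.exp (-t / 2)) * a) ≥ Real.exp (-t / 2) * (2 * m) := by
    nlinarith
  constructor
  · have h2m : 0 < Real.exp (-t / 2) * (2 * m) := by positivity
    have hprod := mul_le_mul hCD hsum (by positivity)
      (by nlinarith [mul_pos hs (half_pos hε)])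
    have h3 : (Real.exp (-t / 2) * (ε / 2)) * (Real.exp (-t / 2) * (2 * m)) =
        Real.exp (-t) * ε * m := by rw [← hsq]; ring
    have h4 : Real.exp (-t₀) * ε * m ≤ Real.exp (-t) * ε * m := by
      have := mul_le_mul_of_nonneg_right hmono (by positivity : (0:ℝ) ≤ ε * m)
      linarith [this]
    nlinarith [hprod, h3, h4]
  · positivity
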